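/- The space 𝔾𝕊₁ ∖ {(0,0,1)} strongly deformation retracts onto the copy 𝔼 × {0} of the Hawaiian earring: there is a continuous map h : (𝔾𝕊₁ ∖ {(0,0,1)}) × [0,1] → 𝔾𝕊₁ ∖ {(0,0,1)} with h(x,0) = x for all x, h(x,1) ∈ 𝔼 × {0} for all x, and h(e,s) = e for all e ∈ 𝔼 × {0} and all s ∈ [0,1]. -/

import Mathlib

noncomputable section

namespace Griffiths

/-- The one-fold Griffiths cone over the Hawaiian earring, as a subset of Euclidean 3-space:
the union over heights `r ∈ [0,1]` and `n ∈ ℕ` of the circle at height `r` with center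
`(0, (1-r)/(n+3))` and radius `(1-r)/(n+3)` (the geodesic cone over the Hawaiian earring
`𝔼 × {0}` with cone tip `(0,0,1)`). -/
def GS1set : Set (EuclideanSpace ℝ (Fin 3)) :=
  ⋃ r ∈ Set.Icc (0 : ℝ) 1, ⋃ n : ℕ,
    {x | x 0 ^ 2 + (x 1 - (1 - r) / (n + 3)) ^ 2 = ((1 - r) / (n + 3)) ^ 2 ∧ x 2 = r}

/-- The cone tip `(0,0,1)` of `𝔾𝕊₁`. -/
def coneTip : EuclideanSpace ℝ (Fin 3) := WithLp.toLp 2 (fun i : Fin 3 => if i = 2 then (1 : ℝ) else 0)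

/-- The copy `𝔼 × {0}` of the Hawaiian earring at the base of the cone `𝔾𝕊₁`,
as a subset of `ℝ³`. -/
def earringBase : Set (EuclideanSpace ℝ (Fin 3)) :=
  ⋃ n : ℕ, {x | x 0 ^ 2 + (x 1 - 1 / (n + 3)) ^ 2 = (1 / (n + 3)) ^ 2 ∧ x 2 = 0}

/-- The homotopy, on the ambient space. -/
def Hmap (x : EuclideanSpace ℝ (Fin 3)) (s : ℝ) : EuclideanSpace ℝ (Fin 3) :=
  WithLp.toLp 2 (fun i => if i = 2 then x 2 * (1 - s)
    else ((1 - x 2 * (1 - s)) / (1 - x 2)) * x i)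

lemma Hmap_apply0 (x : EuclideanSpace ℝ (Fin 3)) (s : ℝ) :
    Hmap x s 0 = ((1 - x 2 * (1 - s)) / (1 - x 2)) * x 0 := rfl

lemma Hmap_apply1 (x : EuclideanSpace ℝ (Fin 3)) (s : ℝ) :
    Hmap x s 1 = ((1 - x 2 * (1 - s)) / (1 - x 2)) * x 1 := rfl

lemma Hmap_apply2 (x : EuclideanSpace ℝ (Fin 3)) (s : ℝ) :
    Hmap x s 2 = x 2 * (1 - s) := rfl

lemma mem_GS1_iff {x : EuclideanSpace ℝ (Fin 3)} :
    x ∈ GS1set ↔ 0 ≤ x 2 ∧ x 2 ≤ 1 ∧ ∃ n : ℕ,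
      x 0 ^ 2 + (x 1 - (1 - x 2) / (n + 3)) ^ 2 = ((1 - x 2) / (n + 3)) ^ 2 := by
  constructor
  · intro h
    simp only [GS1set, Set.mem_iUnion, Set.mem_setOf_eq, Set.mem_Icc] at h
    obtain ⟨r, ⟨hr0, hr1⟩, n, hx, hx2⟩ := h
    rw [hx2]
    exact ⟨hr0, hr1, n, hx⟩
  · rintro ⟨h0, h1, n, hn⟩
    simp only [GS1set, Set.mem_iUnion, Set.mem_setOf_eq, Set.mem_Icc]
    exact ⟨x 2, ⟨h0, h1⟩, n, hn, rfl⟩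

lemma eq_tip {x : EuclideanSpace ℝ (Fin 3)} (hx : x ∈ GS1set) (h2 : x 2 = 1) :
    x = coneTip := by
  rw [mem_GS1_iff] at hx
  obtain ⟨-, -, n, hn⟩ := hx
  rw [h2] at hn
  norm_num at hn
  have h0 : x 0 = 0 := by nlinarith [sq_nonneg (x 0), sq_nonneg (x 1)]
  have h1 : x 1 = 0 := by nlinarith [sq_nonneg (x 0), sq_nonneg (x 1)]
  ext i
  fin_cases i <;> simp [coneTip, h0, h1, h2]

lemma lt_one_of_mem {x : EuclideanSpace ℝ (Fin 3)} (hx : x ∈ GS1set \ {coneTip}) :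
    x 2 < 1 := by
  rcases hx with ⟨hx, hne⟩
  rcases lt_or_eq_of_le (mem_GS1_iff.mp hx).2.1 with h | h
  · exact h
  · exact absurd (eq_tip hx h) hne

lemma Hmap_mem {x : EuclideanSpace ℝ (Fin 3)} (hx : x ∈ GS1set \ {coneTip})
    {s : ℝ} (hs : s ∈ Set.Icc (0:ℝ) 1) : Hmap x s ∈ GS1set \ {coneTip} := by
  have hr0 : 0 ≤ x 2 := (mem_GS1_iff.mp hx.1).1
  have hr1 : x 2 < 1 := lt_one_of_mem hx
  obtain ⟨-, -, n, hn⟩ := mem_GS1_iff.mp hx.1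
  have hnew2 : Hmap x s 2 = x 2 * (1 - s) := rfl
  have hlt : Hmap x s 2 < 1 := by
    rw [hnew2]
    nlinarith [hs.1, hs.2]
  constructor
  · rw [mem_GS1_iff]
    refine ⟨?_, le_of_lt hlt, n, ?_⟩
    · rw [hnew2]; exact mul_nonneg hr0 (by linarith [hs.2])
    · rw [Hmap_apply0, Hmap_apply1, Hmap_apply2]
      have hne : (1 : ℝ) - x 2 ≠ 0 := by linarith
      set L : ℝ := (1 - x 2 * (1 - s)) / (1 - x 2) with hL
      have key : 1 - x 2 * (1 - s) = L * (1 - x 2) := by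
        rw [hL, div_mul_cancel₀ _ hne]
      rw [key]
      have hn3 : ((n : ℝ) + 3) ≠ 0 := by positivity
      field_simp at hn ⊢
      nlinarith [hn, sq_nonneg L]
  · intro hmem
    have : Hmap x s 2 = coneTip 2 := by rw [hmem]
    simp [coneTip] at this
    linarith [hlt, this.ge, this.le]

theorem GS1_minus_tip_deformation_retract :
    ∃ h : (↥(GS1set \ {coneTip}) × ↥(Set.Icc (0:ℝ) 1)) → ↥(GS1set \ {coneTip}),
      Continuous h ∧
      (∀ x, h (x, ⟨0, by norm_num⟩) = x) ∧
      (∀ x, (h (x, ⟨1, by norm_num⟩)).val ∈ earringBase) ∧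
      (∀ x s, x.val ∈ earringBase → h (x, s) = x) := by
  refine ⟨fun p => ⟨Hmap p.1.val p.2.val, Hmap_mem p.1.2 p.2.2⟩, ?_, ?_, ?_, ?_⟩
  · apply Continuous.subtype_mk
    show Continuous (fun p : ↥(GS1set \ {coneTip}) × ↥(Set.Icc (0:ℝ) 1) =>
      WithLp.toLp 2 ((Hmap p.1.val p.2.val).ofLp))
    apply (PiLp.continuous_toLp 2 _).comp
    apply continuous_pi
    intro i
    have hc2 : Continuous (fun p : ↥(GS1set \ {coneTip}) × ↥(Set.Icc (0:ℝ) 1) =>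
        p.1.val 2) := (PiLp.continuous_apply 2 (fun _ : Fin 3 => ℝ) (2 : Fin 3)).comp (continuous_subtype_val.comp continuous_fst)
    have hcs : Continuous (fun p : ↥(GS1set \ {coneTip}) × ↥(Set.Icc (0:ℝ) 1) =>
        (p.2 : ℝ)) := continuous_subtype_val.comp continuous_snd
    have hL : Continuous (fun p : ↥(GS1set \ {coneTip}) × ↥(Set.Icc (0:ℝ) 1) =>
        (1 - p.1.val 2 * (1 - (p.2 : ℝ))) / (1 - p.1.val 2)) := by
      apply Continuous.div
      · exact (continuous_const.sub (hc2.mul (continuous_const.sub hcs)))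
      · exact continuous_const.sub hc2
      · intro p
        have := lt_one_of_mem p.1.2
        intro h; linarith [this]
    fin_cases i
    · exact hL.mul
        ((PiLp.continuous_apply 2 (fun _ : Fin 3 => ℝ) (0 : Fin 3)).comp (continuous_subtype_val.comp continuous_fst))
    · exact hL.mul
        ((PiLp.continuous_apply 2 (fun _ : Fin 3 => ℝ) (1 : Fin 3)).comp (continuous_subtype_val.comp continuous_fst))
    · exact hc2.mul (continuous_const.sub hcs)
  · intro x
    apply Subtype.ext
    have h1 : x.val 2 < 1 := lt_one_of_mem x.2
    have hne : (1 : ℝ) - x.val 2 ≠ 0 := by linarith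
    show Hmap x.val 0 = x.val
    ext i
    fin_cases i
    · show Hmap x.val 0 0 = x.val 0
      rw [Hmap_apply0]; field_simp; ring
    · show Hmap x.val 0 1 = x.val 1
      rw [Hmap_apply1]; field_simp; ring
    · show Hmap x.val 0 2 = x.val 2
      rw [Hmap_apply2]; ring
  · intro x
    obtain ⟨-, -, n, hn⟩ := mem_GS1_iff.mp x.2.1
    simp only [earringBase, Set.mem_iUnion, Set.mem_setOf_eq]
    refine ⟨n, ?_, by rw [Hmap_apply2]; ring⟩
    rw [Hmap_apply0, Hmap_apply1]
    have h1 : x.val 2 < 1 := lt_one_of_mem x.2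
    have hne : (1 : ℝ) - x.val 2 ≠ 0 := by linarith
    have hL : (1 - x.val 2 * (1 - 1)) / (1 - x.val 2) = 1 / (1 - x.val 2) := by ring_nf
    have hn3 : ((n : ℝ) + 3) ≠ 0 := by positivity
    field_simp at hn ⊢
    nlinarith [hn]
  · intro x s hx
    have h2 : x.val 2 = 0 := by
      simp only [earringBase, Set.mem_iUnion, Set.mem_setOf_eq] at hx
      exact hx.choose_spec.2
    apply Subtype.ext
    show Hmap x.val s.val = x.val
    ext i
    fin_cases i
    · show Hmap x.val s.val 0 = x.val 0
      rw [Hmap_apply0, h2]; ring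
    · show Hmap x.val s.val 1 = x.val 1
      rw [Hmap_apply1, h2]; ring
    · show Hmap x.val s.val 2 = x.val 2
      rw [Hmap_apply2, h2]; ring

end Griffiths
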